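/- Let k₀ ⊆ ℂ be a number field, α ∈ k₀, 0 < |α| < 1, and f₁,…,f_ℓ ∈ k₀[[z]] series converging at α. Assume the following specialization property holds: for every linear polynomial P ∈ ℚ̄[X₁,…,X_N] (N ≥ ℓ, possibly with constant term) vanishing at (f₁(α),…,f_N(α)), there exists Q ∈ ℚ̄[z, X₁,…,X_N], linear in the X-variables, with Q(z, f₁(z),…,f_N(z)) = 0 and P(X) = Q(α, X). If f₁(α),…,f_ℓ(α) are linearly independent over k₀, then they are linearly independent over ℚ̄. -/

import Mathlib

open PowerSeries

set_option maxHeartbeats 1000000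
set_option synthInstance.maxHeartbeats 400000

/-- Restricting a sum over `Fin N` to `Fin ℓ` when the tail terms vanish. -/
lemma aux_sum_restrict {M : Type*} [AddCommMonoid M] {ℓ N : ℕ} (hℓN : ℓ ≤ N)
    (g : Fin N → M) (h0 : ∀ i : Fin N, ¬ (i : ℕ) < ℓ → g i = 0) :
    ∑ i : Fin N, g i = ∑ j : Fin ℓ, g (Fin.castLE hℓN j) := by
  classical
  have h1 : ∑ j : Fin ℓ, g (Fin.castLE hℓN j)
      = ∑ i ∈ Finset.univ.map (Fin.castLEEmb hℓN), g i :=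
    (Finset.sum_map Finset.univ (Fin.castLEEmb hℓN) g).symm
  rw [h1]
  refine (Finset.sum_subset (Finset.subset_univ _) ?_).symm
  intro i _ hi
  refine h0 i fun hlt => hi ?_
  simp only [Finset.mem_map, Finset.mem_univ, true_and]
  exact ⟨⟨(i : ℕ), hlt⟩, Fin.ext rfl⟩

/-- A polynomial evaluated at a point, as a `HasSum` of its coefficients. -/
lemma aux_poly_hasSum (α : ℂ) (p : Polynomial ℂ) :
    HasSum (fun n => p.coeff n * α ^ n) (p.eval α) := by
  have h : p.eval α = ∑ n ∈ p.support, p.coeff n * α ^ n := by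
    rw [Polynomial.eval_eq_sum, Polynomial.sum_def]
  rw [h]
  exact hasSum_sum_of_ne_finset_zero fun n hn => by
    simp [Polynomial.notMem_support_iff.mp hn]

/-- Cauchy product of a polynomial with a summable power series. -/
lemma aux_conv_hasSum (α : ℂ) (g : ℕ → ℂ) (T : ℂ)
    (hg : HasSum (fun n => g n * α ^ n) T) (p : Polynomial ℂ) :
    HasSum (fun n => (∑ u ∈ Finset.HasAntidiagonal.antidiagonal n, p.coeff u.1 * g u.2) * α ^ n)
      (p.eval α * T) := by
  induction p using Polynomial.induction_on' with
  | add p q hp hq =>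
      simp only [Polynomial.coeff_add, Polynomial.eval_add, add_mul, Finset.sum_add_distrib]
      exact hp.add hq
  | monomial k a =>
      have hpt : ∀ n, (∑ u ∈ Finset.HasAntidiagonal.antidiagonal n, (Polynomial.monomial k a).coeff u.1 * g u.2)
          = if k ≤ n then a * g (n - k) else 0 := by
        intro n
        by_cases h : k ≤ n
        · rw [if_pos h, Finset.sum_eq_single (k, n - k)]
          · simp [Polynomial.coeff_monomial]
          · intro u hu hne
            have hmem := Finset.HasAntidiagonal.mem_antidiagonal.mp hu
            have h1 : u.1 ≠ k := by
              intro h1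
              exact hne (Prod.ext h1 (by omega))
            rw [Polynomial.coeff_monomial, if_neg (fun hh => h1 hh.symm), zero_mul]
          · intro hmem
            exact absurd (Finset.HasAntidiagonal.mem_antidiagonal.mpr (by omega)) hmem
        · rw [if_neg h]
          apply Finset.sum_eq_zero
          intro u hu
          have hmem := Finset.HasAntidiagonal.mem_antidiagonal.mp hu
          rw [Polynomial.coeff_monomial, if_neg (by omega), zero_mul]
      have key := hg.mul_left (a * α ^ k)
      rw [Polynomial.eval_monomial]
      have hinj : Function.Injective (fun m : ℕ => m + k) := fun x y h => Nat.add_right_cancel h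
      have h0 : ∀ n ∉ Set.range (fun m : ℕ => m + k),
          (∑ u ∈ Finset.HasAntidiagonal.antidiagonal n, (Polynomial.monomial k a).coeff u.1 * g u.2) * α ^ n
            = 0 := by
        intro n hn
        have hnk : ¬ k ≤ n := fun h => hn ⟨n - k, by show n - k + k = n; omega⟩
        rw [hpt, if_neg hnk, zero_mul]
      have hfun : ((fun n => (∑ u ∈ Finset.HasAntidiagonal.antidiagonal n,
            (Polynomial.monomial k a).coeff u.1 * g u.2) * α ^ n) ∘ (fun m : ℕ => m + k))
          = fun m => a * α ^ k * (g m * α ^ m) := by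
        funext m
        have h1 : k ≤ m + k := Nat.le_add_left k m
        rw [Function.comp_apply, hpt, if_pos h1, Nat.add_sub_cancel, pow_add]
        ring
      exact (hinj.hasSum_iff h0).mp (hfun ▸ key)

/-- Linear-independence lifting: assume the specialization property (every affine-linear
relation over `ℚ̄` among the values `f₁(α),…,f_N(α)` comes, by specializing `z = α`, from
a relation `Q(z, f₁(z),…,f_N(z)) = 0` with `Q` affine-linear in the `X`-variables with
coefficients in `ℚ̄[z]`). If `f₁(α),…,f_ℓ(α)` are linearly independent over the number
field `k₀`, then they are linearly independent over `ℚ̄`. -/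
theorem stmt14 (k₀ : Subfield ℂ) (hnf : FiniteDimensional ℚ k₀)
    (N ℓ : ℕ) (hℓ1 : 1 ≤ ℓ) (hℓN : ℓ ≤ N)
    (f : Fin N → PowerSeries k₀)
    (α : k₀) (hα0 : 0 < ‖(α : ℂ)‖) (hα1 : ‖(α : ℂ)‖ < 1)
    (hconv : ∀ i, Summable fun n : ℕ => (PowerSeries.coeff (R := k₀) n (f i) : ℂ) * (α : ℂ) ^ n)
    (fval : Fin N → ℂ)
    (hfval : ∀ i, fval i = ∑' n : ℕ, (PowerSeries.coeff (R := k₀) n (f i) : ℂ) * (α : ℂ) ^ n)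
    (hspec : ∀ (lam₀ : ℂ) (lam : Fin N → ℂ), IsAlgebraic ℚ lam₀ →
      (∀ i, IsAlgebraic ℚ (lam i)) → lam₀ + ∑ i, lam i * fval i = 0 →
      ∃ c : Fin (N + 1) → Polynomial ℂ,
        (∀ (i : Fin (N + 1)) (n : ℕ), IsAlgebraic ℚ ((c i).coeff n)) ∧
        ((c 0 : PowerSeries ℂ)) +
          ∑ i : Fin N, ((c i.succ : PowerSeries ℂ)) * (f i).map k₀.subtype = 0 ∧
        (c 0).eval (α : ℂ) = lam₀ ∧ ∀ i : Fin N, (c i.succ).eval (α : ℂ) = lam i)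
    (hindep : LinearIndependent k₀ (fun i : Fin ℓ => fval (Fin.castLE hℓN i))) :
    ∀ lam : Fin ℓ → ℂ, (∀ i, IsAlgebraic ℚ (lam i)) →
      ∑ i, lam i * fval (Fin.castLE hℓN i) = 0 → ∀ i, lam i = 0 := by
  classical
  intro lam hlamalg hlamsum
  set lam' : Fin N → ℂ := fun i => if h : (i : ℕ) < ℓ then lam ⟨i, h⟩ else 0 with hlam'def
  have hlam'c : ∀ j : Fin ℓ, lam' (Fin.castLE hℓN j) = lam j := by
    intro j
    exact dif_pos j.isLt
  have hzero : ∀ i : Fin N, ¬ (i : ℕ) < ℓ → lam' i = 0 := fun i h => dif_neg h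
  have hsum0 : (0 : ℂ) + ∑ i, lam' i * fval i = 0 := by
    rw [zero_add, aux_sum_restrict hℓN (fun i => lam' i * fval i)
      (fun i h => by rw [hzero i h, zero_mul]), ← hlamsum]
    exact Finset.sum_congr rfl fun j _ => by rw [hlam'c]
  have halg' : ∀ i, IsAlgebraic ℚ (lam' i) := by
    intro i
    by_cases h : (i : ℕ) < ℓ
    · simp only [hlam'def]; rw [dif_pos h]; exact hlamalg _
    · rw [hzero i h]; exact isAlgebraic_zero
  obtain ⟨c, -, hrel, hc0, hcval⟩ := hspec 0 lam' isAlgebraic_zero halg' hsum0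
  -- the `k₀`-span of the coefficients of the `c i`
  set S : Finset ℂ := Finset.univ.biUnion (fun i : Fin (N + 1) => (c i).coeffs) with hSdef
  set W : Submodule k₀ ℂ := Submodule.span k₀ (S : Set ℂ) with hWdef
  have hmemW : ∀ (i : Fin (N + 1)) (n : ℕ), (c i).coeff n ∈ W := by
    intro i n
    by_cases h : (c i).coeff n = 0
    · rw [h]; exact W.zero_mem
    · apply Submodule.subset_span
      simp only [hSdef, Finset.coe_biUnion, Set.mem_iUnion, Finset.mem_coe, Finset.mem_univ,
        Set.mem_setOf_eq, true_and]
      exact ⟨i, trivial, Polynomial.coeff_mem_coeffs h⟩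
  haveI : Module.Finite k₀ W := Module.Finite.span_of_finite k₀ S.finite_toSet
  set b := Module.finBasis k₀ W with hbdef
  obtain ⟨W', hWc⟩ := Submodule.exists_isCompl W
  set proj : ℂ →ₗ[k₀] W := W.linearProjOfIsCompl W' hWc with hprojdef
  set L : Fin (Module.finrank k₀ W) → (ℂ →ₗ[k₀] ℂ) :=
    fun j => (Algebra.linearMap k₀ ℂ).comp ((b.coord j).comp proj) with hLdef
  have hLapp : ∀ j x, L j x = ((b.repr (proj x) j : k₀) : ℂ) := by
    intro j x
    simp only [hLdef, LinearMap.comp_apply, Algebra.linearMap_apply, Module.Basis.coord_apply]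
    rfl
  have hLmem : ∀ j x, L j x ∈ k₀ := by
    intro j x
    rw [hLapp]
    exact SetLike.coe_mem _
  have hLsmul : ∀ j (x : ℂ) (a : k₀), L j (x * (a : ℂ)) = L j x * (a : ℂ) := by
    intro j x a
    have h1 : x * (a : ℂ) = a • x := by
      rw [Subring.smul_def, smul_eq_mul, mul_comm]
    rw [h1, map_smul, Subring.smul_def, smul_eq_mul, mul_comm]
  have hLzero : ∀ x, x ∈ W → (∀ j, L j x = 0) → x = 0 := by
    intro x hx hj
    have hproj : proj x = ⟨x, hx⟩ :=
      Submodule.linearProjOfIsCompl_apply_left hWc ⟨x, hx⟩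
    have hrepr : ∀ j, b.repr (⟨x, hx⟩ : W) j = 0 := by
      intro j
      have h := hj j
      rw [hLapp, hproj] at h
      exact_mod_cast h
    have h2 : (⟨x, hx⟩ : W) = 0 := by
      apply b.repr.map_eq_zero_iff.mp
      exact Finsupp.ext hrepr
    exact congrArg Subtype.val h2
  -- component polynomials
  set q : Fin (N + 1) → Fin (Module.finrank k₀ W) → Polynomial ℂ :=
    fun i j => Polynomial.ofFinsupp (AddMonoidAlgebra.ofCoeff ((c i).toFinsupp.coeff.mapRange (L j) (map_zero _))) with hqdef
  have hqcoeff : ∀ i j n, (q i j).coeff n = L j ((c i).coeff n) := by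
    intro i j n
    simp only [hqdef, Polynomial.coeff_ofFinsupp, Finsupp.mapRange_apply]
    rfl
  -- coefficientwise relation over ℂ
  have hcoeffrel : ∀ n : ℕ, (c 0).coeff n
      + ∑ i : Fin N, ∑ u ∈ Finset.HasAntidiagonal.antidiagonal n,
          (c i.succ).coeff u.1 * ((PowerSeries.coeff (R := k₀) u.2 (f i) : k₀) : ℂ) = 0 := by
    intro n
    have h := congrArg (PowerSeries.coeff (R := ℂ) n) hrel
    simpa [map_add, map_sum, PowerSeries.coeff_mul, PowerSeries.coeff_map,
      Polynomial.coeff_coe] using h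
  -- coefficientwise relation for the components
  have hqrel : ∀ j n, (q 0 j).coeff n
      + ∑ i : Fin N, ∑ u ∈ Finset.HasAntidiagonal.antidiagonal n,
          (q i.succ j).coeff u.1 * ((PowerSeries.coeff (R := k₀) u.2 (f i) : k₀) : ℂ) = 0 := by
    intro j n
    calc (q 0 j).coeff n + ∑ i : Fin N, ∑ u ∈ Finset.HasAntidiagonal.antidiagonal n,
            (q i.succ j).coeff u.1 * ((PowerSeries.coeff (R := k₀) u.2 (f i) : k₀) : ℂ)
        = L j ((c 0).coeff n + ∑ i : Fin N, ∑ u ∈ Finset.HasAntidiagonal.antidiagonal n,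
            (c i.succ).coeff u.1 * ((PowerSeries.coeff (R := k₀) u.2 (f i) : k₀) : ℂ)) := by
          rw [map_add, map_sum]
          simp only [hqcoeff, map_sum, hLsmul]
      _ = L j 0 := by rw [hcoeffrel n]
      _ = 0 := map_zero _
  -- evaluations
  have hqeval : ∀ i j, (q i j).eval (α : ℂ) = L j ((c i).eval (α : ℂ)) := by
    intro i j
    set M := (c i).natDegree + (q i j).natDegree + 1 with hMdef
    rw [Polynomial.eval_eq_sum_range' (by omega : (q i j).natDegree < M) (α : ℂ),
        Polynomial.eval_eq_sum_range' (by omega : (c i).natDegree < M) (α : ℂ), map_sum]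
    refine Finset.sum_congr rfl fun m _ => ?_
    rw [hqcoeff]
    have hpow : ((α : ℂ)) ^ m = ((α ^ m : k₀) : ℂ) := by push_cast; ring
    rw [hpow, hLsmul]
  have hevalW : ∀ i : Fin (N + 1), (c i).eval (α : ℂ) ∈ W := by
    intro i
    rw [Polynomial.eval_eq_sum_range' (Nat.lt_succ_self _) (α : ℂ)]
    apply Submodule.sum_mem
    intro m _
    have h : (c i).coeff m * (α : ℂ) ^ m = (α ^ m : k₀) • ((c i).coeff m) := by
      rw [Subring.smul_def, smul_eq_mul, SubmonoidClass.coe_pow, mul_comm]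
    rw [h]
    exact W.smul_mem _ (hmemW i m)
  -- the value relation for each component
  have hR : ∀ j, (q 0 j).eval (α : ℂ)
      + ∑ i : Fin N, (q i.succ j).eval (α : ℂ) * fval i = 0 := by
    intro j
    have h0 : HasSum (fun n => (q 0 j).coeff n * (α : ℂ) ^ n) ((q 0 j).eval (α : ℂ)) :=
      aux_poly_hasSum _ _
    have hi : ∀ i : Fin N, HasSum (fun n => (∑ u ∈ Finset.HasAntidiagonal.antidiagonal n,
        (q i.succ j).coeff u.1 * ((PowerSeries.coeff (R := k₀) u.2 (f i) : k₀) : ℂ)) * (α : ℂ) ^ n)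
        ((q i.succ j).eval (α : ℂ) * fval i) := by
      intro i
      have hg : HasSum (fun n => ((PowerSeries.coeff (R := k₀) n (f i) : k₀) : ℂ) * (α : ℂ) ^ n)
          (fval i) := by
        rw [hfval i]; exact (hconv i).hasSum
      exact aux_conv_hasSum _ _ _ hg _
    have hsum2 := hasSum_sum (s := (Finset.univ : Finset (Fin N)))
      (f := fun i n => (∑ u ∈ Finset.HasAntidiagonal.antidiagonal n,
        (q i.succ j).coeff u.1 * ((PowerSeries.coeff (R := k₀) u.2 (f i) : k₀) : ℂ)) * (α : ℂ) ^ n)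
      (a := fun i => (q i.succ j).eval (α : ℂ) * fval i) (fun i _ => hi i)
    have htot := h0.add hsum2
    have hfun : (fun n => (q 0 j).coeff n * (α : ℂ) ^ n
        + ∑ i : Fin N, (∑ u ∈ Finset.HasAntidiagonal.antidiagonal n,
            (q i.succ j).coeff u.1 * ((PowerSeries.coeff (R := k₀) u.2 (f i) : k₀) : ℂ)) * (α : ℂ) ^ n)
        = fun _ => (0 : ℂ) := by
      funext n
      rw [← Finset.sum_mul, ← add_mul, hqrel j n, zero_mul]
    rw [hfun] at htot
    exact htot.unique hasSum_zero
  -- finish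
  intro i₀
  have hx : (c (Fin.castLE hℓN i₀).succ).eval (α : ℂ) = lam i₀ := by
    rw [hcval]; exact hlam'c i₀
  have hLx : ∀ j, L j ((c (Fin.castLE hℓN i₀).succ).eval (α : ℂ)) = 0 := by
    intro j
    have hRj := hR j
    have hq0 : (q 0 j).eval (α : ℂ) = 0 := by rw [hqeval, hc0, map_zero]
    have hqz : ∀ i : Fin N, ¬ (i : ℕ) < ℓ → (q i.succ j).eval (α : ℂ) = 0 := by
      intro i h
      rw [hqeval, hcval, hzero i h, map_zero]
    rw [hq0, zero_add, aux_sum_restrict hℓN (fun i => (q i.succ j).eval (α : ℂ) * fval i)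
      (fun i h => by rw [hqz i h, zero_mul])] at hRj
    have hmemk : ∀ j₁ : Fin ℓ, (q (Fin.castLE hℓN j₁).succ j).eval (α : ℂ) ∈ k₀ := by
      intro j₁
      rw [hqeval]
      exact hLmem j _
    have hind := Fintype.linearIndependent_iff.mp hindep
    have hgz := hind (fun j₁ => (⟨(q (Fin.castLE hℓN j₁).succ j).eval (α : ℂ), hmemk j₁⟩ : k₀))
      ((Finset.sum_congr rfl fun j₁ _ => Subring.smul_def _ _).trans hRj) i₀
    rw [← hqeval]
    exact congrArg Subtype.val hgz
  have hfinal := hLzero _ (hevalW _) hLx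
  exact hx ▸ hfinal
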